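/- Eckart–Young theorem (Frobenius norm): for any real matrix X with singular value decomposition X = ΨΣVᵀ, the truncated SVD X_r = Ψ_r Σ_r V_rᵀ minimizes ‖X − X̃‖_F over all matrices X̃ of rank at most r, and the minimal error is √(∑_{i>r} σᵢ²). -/

import Mathlib

open Matrix

section Aux

open RealInnerProductSpace

/-- Abel-type summation bound. -/
private lemma abel_bound (a t : ℕ → ℝ) (M r : ℕ) (hmono : Antitone a) (ha0 : ∀ i, 0 ≤ a i)
    (ht0 : ∀ i, 0 ≤ t i) (ht1 : ∀ i, t i ≤ 1)
    (hts : ∑ i ∈ Finset.range M, t i ≤ r) :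
    ∑ i ∈ Finset.range M, a i * t i ≤ ∑ i ∈ Finset.range (min r M), a i := by
  rcases le_or_gt M r with hMr | hrM
  · rw [min_eq_right hMr]
    refine Finset.sum_le_sum fun i _ => ?_
    have := ht1 i; have := ha0 i
    nlinarith
  · rw [min_eq_left hrM.le]
    have hsplit : ∑ i ∈ Finset.range M, a i * t i
        = ∑ i ∈ Finset.range r, a i * t i + ∑ i ∈ Finset.Ico r M, a i * t i := by
      simp only [Finset.range_eq_Ico]
      exact (Finset.sum_Ico_consecutive _ (Nat.zero_le r) hrM.le).symm
    have h2 : ∑ i ∈ Finset.Ico r M, a i * t i ≤ a r * ∑ i ∈ Finset.Ico r M, t i := by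
      rw [Finset.mul_sum]
      refine Finset.sum_le_sum fun i hi => ?_
      have h := hmono (Finset.mem_Ico.mp hi).1
      have := ht0 i
      nlinarith
    have h3 : ∑ i ∈ Finset.Ico r M, t i ≤ (r : ℝ) - ∑ i ∈ Finset.range r, t i := by
      have h : ∑ i ∈ Finset.range r, t i + ∑ i ∈ Finset.Ico r M, t i
          = ∑ i ∈ Finset.range M, t i := by
        simp only [Finset.range_eq_Ico]
        exact Finset.sum_Ico_consecutive _ (Nat.zero_le r) hrM.le
      linarith
    have h4 : a r * ((r:ℝ) - ∑ i ∈ Finset.range r, t i)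
        ≤ ∑ i ∈ Finset.range r, (a i - a i * t i) := by
      have he : (r:ℝ) - ∑ i ∈ Finset.range r, t i = ∑ i ∈ Finset.range r, (1 - t i) := by
        rw [Finset.sum_sub_distrib, Finset.sum_const, Finset.card_range]; simp
      rw [he, Finset.mul_sum]
      refine Finset.sum_le_sum fun i hi => ?_
      have hai : a r ≤ a i := hmono (Finset.mem_range.mp hi).le
      have := ht1 i
      have := ha0 r
      nlinarith
    have h5 : a r * ∑ i ∈ Finset.Ico r M, t i
        ≤ a r * ((r:ℝ) - ∑ i ∈ Finset.range r, t i) :=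
      mul_le_mul_of_nonneg_left h3 (ha0 r)
    have h6 : ∑ i ∈ Finset.range r, a i * t i + ∑ i ∈ Finset.range r, (a i - a i * t i)
        = ∑ i ∈ Finset.range r, a i := by
      rw [← Finset.sum_add_distrib]
      exact Finset.sum_congr rfl fun i _ => by ring
    linarith

private lemma sum_sq_eq_norm_sq {k : ℕ} (x : EuclideanSpace ℝ (Fin k)) :
    ∑ i, x i ^ 2 = ‖x‖ ^ 2 := by
  rw [EuclideanSpace.norm_eq, Real.sq_sqrt (by positivity)]
  simp [Real.norm_eq_abs, sq_abs]

private lemma pyth {E : Type*} [NormedAddCommGroup E] [InnerProductSpace ℝ E] {a b : E}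
    (h : ⟪a, b⟫ = 0) : ‖a + b‖ ^ 2 = ‖a‖ ^ 2 + ‖b‖ ^ 2 := by
  rw [norm_add_sq_real, h]; ring

private lemma frobSq_eq_trace {n m : ℕ} (M : Matrix (Fin n) (Fin m) ℝ) :
    (∑ i, ∑ j, M i j ^ 2) = Matrix.trace (Mᵀ * M) := by
  rw [Finset.sum_comm]
  simp [Matrix.trace, Matrix.diag, Matrix.mul_apply, sq]

private lemma frobSq_conj {n m : ℕ} (Ψ : Matrix (Fin n) (Fin n) ℝ)
    (V : Matrix (Fin m) (Fin m) ℝ) (hΨ : Ψᵀ * Ψ = 1) (hV : Vᵀ * V = 1)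
    (A : Matrix (Fin n) (Fin m) ℝ) :
    (∑ i, ∑ j, (Ψ * A * Vᵀ) i j ^ 2) = ∑ i, ∑ j, A i j ^ 2 := by
  rw [frobSq_eq_trace, frobSq_eq_trace]
  have h1 : (Ψ * A * Vᵀ)ᵀ * (Ψ * A * Vᵀ) = V * (Aᵀ * (A * Vᵀ)) := by
    simp only [Matrix.transpose_mul, Matrix.transpose_transpose, Matrix.mul_assoc]
    rw [← Matrix.mul_assoc Ψᵀ Ψ, hΨ, Matrix.one_mul]
  rw [h1, Matrix.trace_mul_comm, Matrix.mul_assoc, Matrix.mul_assoc, hV, Matrix.mul_one]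

/-- The key Eckart–Young inequality in diagonal form. -/
private lemma key_ineq {n m : ℕ} (σ : ℕ → ℝ) (r : ℕ) (hmono : Antitone σ)
    (hpos : ∀ i, 0 ≤ σ i) (Z : Matrix (Fin n) (Fin m) ℝ) (hZ : Z.rank ≤ r) :
    ∑ i ∈ Finset.Ico r (min n m), σ i ^ 2 ≤
      ∑ i, ∑ j, ((Matrix.of fun (i : Fin n) (j : Fin m) =>
        if (i : ℕ) = (j : ℕ) then σ i else 0) - Z) i j ^ 2 := by
  classical
  set M := min n m with hM
  let eL : (Fin n → ℝ) ≃ₗ[ℝ] EuclideanSpace ℝ (Fin n) :=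
    (WithLp.linearEquiv 2 ℝ (Fin n → ℝ)).symm
  let u : Fin m → EuclideanSpace ℝ (Fin n) := fun j => eL (fun i => if (i : ℕ) = (j : ℕ) then σ (j : ℕ) else 0)
  let z : Fin m → EuclideanSpace ℝ (Fin n) := fun j => eL (fun i => Z i j)
  let W : Submodule ℝ (EuclideanSpace ℝ (Fin n)) := Submodule.span ℝ (Set.range z)
  have hWr : Module.finrank ℝ W ≤ r := by
    have hWmap : W = (Submodule.span ℝ (Set.range Z.col)).map (eL : (Fin n → ℝ) →ₗ[ℝ] EuclideanSpace ℝ (Fin n)) := by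
      rw [Submodule.map_span]
      congr 1
      rw [← Set.range_comp]
      rfl
    rw [hWmap, LinearEquiv.finrank_map_eq, ← Matrix.rank_eq_finrank_span_cols]
    exact hZ
  have hzW : ∀ j, z j ∈ W := fun j => Submodule.subset_span (Set.mem_range_self j)
  have hcolsum : ∀ (A : Matrix (Fin n) (Fin m) ℝ),
      (∑ i, ∑ j, A i j ^ 2) = ∑ j, ‖eL (fun i => A i j)‖ ^ 2 := by
    intro A
    rw [Finset.sum_comm]
    exact Finset.sum_congr rfl fun j _ => sum_sq_eq_norm_sq (eL fun i => A i j)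
  have hsplit : ∀ (x w : EuclideanSpace ℝ (Fin n)), w ∈ W → ‖x - w‖ ^ 2
      = ‖x - (Submodule.orthogonalProjection W x : EuclideanSpace ℝ (Fin n))‖ ^ 2
        + ‖((Submodule.orthogonalProjection W x : W) : EuclideanSpace ℝ (Fin n)) - w‖ ^ 2 := by
    intro x w hw
    have hx : x - w = (x - (Submodule.orthogonalProjection W x : EuclideanSpace ℝ (Fin n)))
        + (((Submodule.orthogonalProjection W x : W) : EuclideanSpace ℝ (Fin n)) - w) := by abel
    rw [hx]
    exact pyth (Submodule.starProjection_inner_eq_zero x _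
      (Submodule.sub_mem W (Submodule.coe_mem _) hw))
  have hnormsplit : ∀ x : EuclideanSpace ℝ (Fin n), ‖x‖ ^ 2
      = ‖x - (Submodule.orthogonalProjection W x : EuclideanSpace ℝ (Fin n))‖ ^ 2
        + ‖((Submodule.orthogonalProjection W x : W) : EuclideanSpace ℝ (Fin n))‖ ^ 2 := by
    intro x
    have := hsplit x 0 (Submodule.zero_mem W)
    simpa using this
  have hcol : ∀ j, ‖u j‖ ^ 2 - ‖((Submodule.orthogonalProjection W (u j) : W) : EuclideanSpace ℝ (Fin n))‖ ^ 2
      ≤ ‖u j - z j‖ ^ 2 := by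
    intro j
    rw [hsplit (u j) (z j) (hzW j), hnormsplit (u j)]
    have := sq_nonneg ‖((Submodule.orthogonalProjection W (u j) : W) : EuclideanSpace ℝ (Fin n)) - z j‖
    linarith
  -- ∑ ‖u j‖²
  have hnu : ∀ j : Fin m, ‖u j‖ ^ 2 = if (j : ℕ) < n then σ (j : ℕ) ^ 2 else 0 := by
    intro j
    rw [← sum_sq_eq_norm_sq (u j)]
    have he : ∀ i : Fin n, u j i = if (i : ℕ) = (j : ℕ) then σ (j : ℕ) else 0 := fun i => rfl
    simp only [he]
    rw [Fin.sum_univ_eq_sum_range (fun k => (if k = (j : ℕ) then σ (j : ℕ) else 0) ^ 2) n]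
    have hconv : ∀ k, (if k = (j : ℕ) then σ (j : ℕ) else 0) ^ 2
        = if k = (j : ℕ) then σ (j : ℕ) ^ 2 else 0 := by
      intro k; split_ifs <;> simp
    rw [Finset.sum_congr rfl fun k _ => hconv k, Finset.sum_ite_eq' (Finset.range n) (j : ℕ)
      (fun _ => σ (j : ℕ) ^ 2)]
    simp [Finset.mem_range]
  have hsumu : ∑ j, ‖u j‖ ^ 2 = ∑ i ∈ Finset.range M, σ i ^ 2 := by
    simp only [hnu]
    rw [Fin.sum_univ_eq_sum_range (fun k => if k < n then σ k ^ 2 else 0) m,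
      ← Finset.sum_filter]
    congr 1
    ext k
    simp only [Finset.mem_filter, Finset.mem_range, hM, lt_min_iff]
    omega
  -- projections of the standard basis vectors
  let t : Fin n → ℝ :=
    fun i => ‖((Submodule.orthogonalProjection W (EuclideanSpace.single i (1:ℝ)) : W) : EuclideanSpace ℝ (Fin n))‖ ^ 2
  have ht0 : ∀ i, 0 ≤ t i := fun i => sq_nonneg _
  have ht1 : ∀ i, t i ≤ 1 := by
    intro i
    have h := hnormsplit (EuclideanSpace.single i (1:ℝ))
    have h2 : ‖(EuclideanSpace.single i (1:ℝ) : EuclideanSpace ℝ (Fin n))‖ = 1 := by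
      simp
    have h3 := sq_nonneg ‖(EuclideanSpace.single i (1:ℝ) : EuclideanSpace ℝ (Fin n))
      - (Submodule.orthogonalProjection W (EuclideanSpace.single i (1:ℝ)) : EuclideanSpace ℝ (Fin n))‖
    have h4 : t i = ‖((Submodule.orthogonalProjection W (EuclideanSpace.single i (1:ℝ)) : W) : EuclideanSpace ℝ (Fin n))‖ ^ 2 := rfl
    rw [h4]
    rw [h2] at h
    nlinarith
  have htsum : ∑ i, t i ≤ (r : ℝ) := by
    set b := stdOrthonormalBasis ℝ W with hb
    have hPx : ∀ x : EuclideanSpace ℝ (Fin n), ‖((Submodule.orthogonalProjection W x : W) : EuclideanSpace ℝ (Fin n))‖ ^ 2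
        = ∑ k, (⟪((b k : W) : EuclideanSpace ℝ (Fin n)), x⟫ : ℝ) ^ 2 := by
      intro x
      have h1 : ‖((Submodule.orthogonalProjection W x : W) : EuclideanSpace ℝ (Fin n))‖
          = ‖b.repr (Submodule.orthogonalProjection W x)‖ := by
        rw [b.repr.norm_map]
        rfl
      rw [h1, ← sum_sq_eq_norm_sq]
      refine Finset.sum_congr rfl fun k _ => ?_
      congr 1
      rw [b.repr_apply_apply]
      exact Submodule.inner_orthogonalProjection_eq_of_mem_left (K := W) (b k) x
    have hsum : ∑ i, t i = ∑ k, ∑ i : Fin n,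
        (⟪((b k : W) : EuclideanSpace ℝ (Fin n)), (EuclideanSpace.single i (1:ℝ) : EuclideanSpace ℝ (Fin n))⟫ : ℝ) ^ 2 := by
      have : ∀ i : Fin n, t i = ∑ k,
          (⟪((b k : W) : EuclideanSpace ℝ (Fin n)), (EuclideanSpace.single i (1:ℝ) : EuclideanSpace ℝ (Fin n))⟫ : ℝ) ^ 2 :=
        fun i => hPx (EuclideanSpace.single i (1:ℝ))
      simp only [this]
      exact Finset.sum_comm
    have hone : ∀ k, (∑ i : Fin n,
        (⟪((b k : W) : EuclideanSpace ℝ (Fin n)), (EuclideanSpace.single i (1:ℝ) : EuclideanSpace ℝ (Fin n))⟫ : ℝ) ^ 2) = 1 := by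
      intro k
      have hinner : ∀ i : Fin n,
          (⟪((b k : W) : EuclideanSpace ℝ (Fin n)), (EuclideanSpace.single i (1:ℝ) : EuclideanSpace ℝ (Fin n))⟫ : ℝ) = ((b k : W) : EuclideanSpace ℝ (Fin n)) i := by
        intro i
        rw [EuclideanSpace.inner_single_right]
        simp
      simp only [hinner]
      rw [sum_sq_eq_norm_sq]
      have hbk : ‖(b k : W)‖ = 1 := b.orthonormal.1 k
      have : ‖((b k : W) : EuclideanSpace ℝ (Fin n))‖ = ‖(b k : W)‖ := rfl
      rw [this, hbk, one_pow]
    rw [hsum]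
    simp only [hone]
    rw [Finset.sum_const, Finset.card_univ, Fintype.card_fin, nsmul_eq_mul, mul_one]
    exact_mod_cast hWr
  -- transfer `t` to ℕ
  let s : ℕ → ℝ := fun i => if h : i < n then t ⟨i, h⟩ else 0
  have hs0 : ∀ i, 0 ≤ s i := by
    intro i; simp only [s]; split_ifs; exacts [ht0 _, le_refl 0]
  have hs1 : ∀ i, s i ≤ 1 := by
    intro i; simp only [s]; split_ifs; exacts [ht1 _, zero_le_one]
  have hsn : ∀ i : Fin n, s (i : ℕ) = t i := by
    intro i
    simp only [s]
    rw [dif_pos i.isLt]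
  have hssum : ∑ i ∈ Finset.range M, s i ≤ (r : ℝ) := by
    calc ∑ i ∈ Finset.range M, s i ≤ ∑ i ∈ Finset.range n, s i := by
          apply Finset.sum_le_sum_of_subset_of_nonneg
          · exact Finset.range_subset_range.mpr (by omega)
          · intro i _ _; exact hs0 i
      _ = ∑ i, t i := by
          rw [← Fin.sum_univ_eq_sum_range s n]
          exact Finset.sum_congr rfl fun i _ => hsn i
      _ ≤ (r : ℝ) := htsum
  -- ∑ ‖P (u j)‖²
  have hnp : ∀ j : Fin m, ‖((Submodule.orthogonalProjection W (u j) : W) : EuclideanSpace ℝ (Fin n))‖ ^ 2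
      = σ (j : ℕ) ^ 2 * s (j : ℕ) := by
    intro j
    by_cases hj : (j : ℕ) < n
    · have hfn : (fun i : Fin n => if (i : ℕ) = (j : ℕ) then σ (j : ℕ) else 0)
          = σ (j : ℕ) • (Pi.single (⟨(j : ℕ), hj⟩ : Fin n) (1:ℝ) : Fin n → ℝ) := by
        funext i
        simp only [Pi.smul_apply, Pi.single_apply, smul_eq_mul]
        by_cases h : (i : ℕ) = (j : ℕ)
        · rw [if_pos h, if_pos (Fin.ext h : i = ⟨(j : ℕ), hj⟩), mul_one]
        · rw [if_neg h, if_neg (fun hc => h (congrArg Fin.val hc)), mul_zero]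
      have hu : u j = eL (σ (j : ℕ) • (Pi.single (⟨(j : ℕ), hj⟩ : Fin n) (1:ℝ) : Fin n → ℝ)) :=
        congrArg (⇑eL) hfn
      have heq : eL ((Pi.single (⟨(j : ℕ), hj⟩ : Fin n) (1:ℝ) : Fin n → ℝ))
          = EuclideanSpace.single (⟨(j : ℕ), hj⟩ : Fin n) (1:ℝ) := rfl
      rw [hu, _root_.map_smul, heq, _root_.map_smul, Submodule.coe_smul, norm_smul,
        Real.norm_eq_abs, mul_pow, sq_abs]
      congr 1
      simp only [s]
      rw [dif_pos hj]
    · have hu : u j = 0 := by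
        have hfn : (fun i : Fin n => if (i : ℕ) = (j : ℕ) then σ (j : ℕ) else 0)
            = (0 : Fin n → ℝ) := by
          funext i
          rw [if_neg (by omega)]
          rfl
        show eL (fun i : Fin n => if (i : ℕ) = (j : ℕ) then σ (j : ℕ) else 0) = 0
        rw [hfn, map_zero]
      rw [hu, map_zero]
      simp only [s]
      rw [dif_neg hj, mul_zero, ZeroMemClass.coe_zero, norm_zero]
      norm_num
  have hsump : ∑ j, ‖((Submodule.orthogonalProjection W (u j) : W) : EuclideanSpace ℝ (Fin n))‖ ^ 2
      ≤ ∑ i ∈ Finset.range (min r M), σ i ^ 2 := by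
    simp only [hnp]
    rw [Fin.sum_univ_eq_sum_range (fun k => σ k ^ 2 * s k) m]
    have hres : ∑ k ∈ Finset.range m, σ k ^ 2 * s k = ∑ k ∈ Finset.range M, σ k ^ 2 * s k := by
      symm
      apply Finset.sum_subset
      · exact Finset.range_subset_range.mpr (by omega)
      · intro k hk hk2
        simp only [Finset.mem_range] at hk hk2
        have hkn : ¬ k < n := by omega
        simp only [s]
        rw [dif_neg hkn, mul_zero]
    rw [hres]
    have hA : Antitone (fun i => σ i ^ 2) := by
      intro i j hij
      have h1 := hmono hij
      have h2 := hpos j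
      dsimp only
      nlinarith
    exact abel_bound (fun i => σ i ^ 2) s M r hA (fun i => sq_nonneg _) hs0 hs1 hssum
  -- assemble
  have hstep1 : ∑ i ∈ Finset.Ico r M, σ i ^ 2
      ≤ ∑ i ∈ Finset.range M, σ i ^ 2 - ∑ i ∈ Finset.range (min r M), σ i ^ 2 := by
    have hdecomp : ∑ i ∈ Finset.range (min r M), σ i ^ 2
        + ∑ i ∈ Finset.Ico (min r M) M, σ i ^ 2 = ∑ i ∈ Finset.range M, σ i ^ 2 := by
      simp only [Finset.range_eq_Ico]
      exact Finset.sum_Ico_consecutive _ (Nat.zero_le _) (min_le_right r M)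
    have hico : ∑ i ∈ Finset.Ico r M, σ i ^ 2 = ∑ i ∈ Finset.Ico (min r M) M, σ i ^ 2 := by
      rcases le_total r M with h | h
      · rw [min_eq_left h]
      · rw [min_eq_right h, Finset.Ico_self, Finset.Ico_eq_empty (by omega)]
    linarith
  calc ∑ i ∈ Finset.Ico r M, σ i ^ 2
      ≤ ∑ i ∈ Finset.range M, σ i ^ 2 - ∑ i ∈ Finset.range (min r M), σ i ^ 2 := hstep1
    _ ≤ ∑ j, ‖u j‖ ^ 2 - ∑ j, ‖((Submodule.orthogonalProjection W (u j) : W) : EuclideanSpace ℝ (Fin n))‖ ^ 2 := by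
        rw [hsumu]
        linarith [hsump]
    _ ≤ ∑ j, ‖u j - z j‖ ^ 2 := by
        rw [← Finset.sum_sub_distrib]
        exact Finset.sum_le_sum fun j _ => hcol j
    _ = ∑ i, ∑ j, ((Matrix.of fun (i : Fin n) (j : Fin m) =>
          if (i : ℕ) = (j : ℕ) then σ i else 0) - Z) i j ^ 2 := by
        rw [hcolsum]
        refine Finset.sum_congr rfl fun j _ => ?_
        have hjz : u j - z j = eL (fun i => ((Matrix.of fun (i : Fin n) (j : Fin m) =>
            if (i : ℕ) = (j : ℕ) then σ i else 0) - Z) i j) := by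
          rw [← map_sub]
          congr 1
          funext i
          simp only [Pi.sub_apply, Matrix.sub_apply, Matrix.of_apply]
          by_cases h : (i : ℕ) = (j : ℕ)
          · rw [if_pos h, if_pos h, h]
          · rw [if_neg h, if_neg h]
        rw [hjz]

end Aux

/-- The Frobenius norm of a real matrix. -/
noncomputable def frobNorm {n m : ℕ} (M : Matrix (Fin n) (Fin m) ℝ) : ℝ :=
  Real.sqrt (∑ i, ∑ j, (M i j) ^ 2)

/-- Eckart–Young, Frobenius norm: given an SVD X = ΨΣVᵀ with nonincreasing
nonnegative singular values σ, the rank-r truncation X_r = Ψ Σ_r Vᵀ minimizes ‖X − X̃‖_F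
over matrices X̃ of rank at most r, with minimal error √(∑_{i ≥ r} σᵢ²). -/
theorem stmt14 {n m : ℕ} (X : Matrix (Fin n) (Fin m) ℝ)
    (Ψ : Matrix (Fin n) (Fin n) ℝ) (V : Matrix (Fin m) (Fin m) ℝ) (σ : ℕ → ℝ)
    (hΨ : Ψᵀ * Ψ = 1) (hV : Vᵀ * V = 1)
    (hmono : Antitone σ) (hpos : ∀ i, 0 ≤ σ i) (hzero : ∀ i, min n m ≤ i → σ i = 0)
    (hX : X = Ψ * (Matrix.of fun (i : Fin n) (j : Fin m) =>
      if (i : ℕ) = (j : ℕ) then σ i else 0) * Vᵀ)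
    (r : ℕ)
    (Xr : Matrix (Fin n) (Fin m) ℝ)
    (hXr : Xr = Ψ * (Matrix.of fun (i : Fin n) (j : Fin m) =>
      if (i : ℕ) = (j : ℕ) ∧ (i : ℕ) < r then σ i else 0) * Vᵀ) :
    (∀ Y : Matrix (Fin n) (Fin m) ℝ, Y.rank ≤ r → frobNorm (X - Xr) ≤ frobNorm (X - Y)) ∧
      frobNorm (X - Xr) = Real.sqrt (∑ i ∈ Finset.Ico r (min n m), (σ i) ^ 2) := by
  classical
  have hΨ' : Ψ * Ψᵀ = 1 := mul_eq_one_comm.mp hΨ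
  have hV' : V * Vᵀ = 1 := mul_eq_one_comm.mp hV
  set D : Matrix (Fin n) (Fin m) ℝ :=
    Matrix.of (fun (i : Fin n) (j : Fin m) => if (i : ℕ) = (j : ℕ) then σ i else 0) with hD
  set Dr : Matrix (Fin n) (Fin m) ℝ :=
    Matrix.of (fun (i : Fin n) (j : Fin m) =>
      if (i : ℕ) = (j : ℕ) ∧ (i : ℕ) < r then σ i else 0) with hDr
  have hDDr : X - Xr = Ψ * (D - Dr) * Vᵀ := by
    rw [hX, hXr, Matrix.mul_sub, Matrix.sub_mul]
  -- Frobenius square of D - Dr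
  have hDDrSq : (∑ i, ∑ j, (D - Dr) i j ^ 2) = ∑ i ∈ Finset.Ico r (min n m), σ i ^ 2 := by
    have hent : ∀ (i : Fin n) (j : Fin m), (D - Dr) i j
        = if (i : ℕ) = (j : ℕ) ∧ r ≤ (i : ℕ) then σ (i : ℕ) else 0 := by
      intro i j
      simp only [hD, hDr, Matrix.sub_apply, Matrix.of_apply]
      by_cases h : (i : ℕ) = (j : ℕ)
      · by_cases h2 : (i : ℕ) < r
        · rw [if_pos h, if_pos ⟨h, h2⟩, if_neg (fun hc => absurd hc.2 (Nat.not_le.mpr h2)),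
            sub_self]
        · rw [if_pos h, if_neg (fun hc => h2 hc.2), if_pos ⟨h, Nat.le_of_not_lt h2⟩, sub_zero]
      · rw [if_neg h, if_neg (fun hc => h hc.1), if_neg (fun hc => h hc.1), sub_zero]
    simp only [hent]
    have hin : ∀ i : Fin n,
        (∑ j : Fin m, (if (i : ℕ) = (j : ℕ) ∧ r ≤ (i : ℕ) then σ (i : ℕ) else 0) ^ 2)
        = if (i : ℕ) < m ∧ r ≤ (i : ℕ) then σ (i : ℕ) ^ 2 else 0 := by
      intro i
      rw [Fin.sum_univ_eq_sum_range
        (fun k => (if (i : ℕ) = k ∧ r ≤ (i : ℕ) then σ (i : ℕ) else 0) ^ 2) m]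
      have hconv : ∀ k, (if (i : ℕ) = k ∧ r ≤ (i : ℕ) then σ (i : ℕ) else 0) ^ 2
          = if k = (i : ℕ) then (if r ≤ (i : ℕ) then σ (i : ℕ) ^ 2 else 0) else 0 := by
        intro k
        by_cases h1 : (i : ℕ) = k
        · by_cases h2 : r ≤ (i : ℕ)
          · rw [if_pos ⟨h1, h2⟩, if_pos h1.symm, if_pos h2]
          · rw [if_neg (fun hc => h2 hc.2), if_pos h1.symm, if_neg h2]
            norm_num
        · rw [if_neg (fun hc => h1 hc.1), if_neg (fun hc => h1 hc.symm)]
          norm_num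
      rw [Finset.sum_congr rfl fun k _ => hconv k, Finset.sum_ite_eq' (Finset.range m)
        ((i : ℕ)) (fun _ => if r ≤ (i : ℕ) then σ (i : ℕ) ^ 2 else 0)]
      by_cases h1 : (i : ℕ) < m <;> by_cases h2 : r ≤ (i : ℕ) <;>
        simp [h1, h2, Finset.mem_range]
    simp only [hin]
    rw [Fin.sum_univ_eq_sum_range (fun k => if k < m ∧ r ≤ k then σ k ^ 2 else 0) n,
      ← Finset.sum_filter]
    congr 1
    ext k
    simp only [Finset.mem_filter, Finset.mem_range, Finset.mem_Ico, lt_min_iff]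
    omega
  have hfr2 : (∑ i, ∑ j, (X - Xr) i j ^ 2) = ∑ i ∈ Finset.Ico r (min n m), σ i ^ 2 := by
    rw [hDDr, frobSq_conj Ψ V hΨ hV, hDDrSq]
  constructor
  · intro Y hY
    set Z := Ψᵀ * Y * V with hZdef
    have hZr : Z.rank ≤ r :=
      le_trans (le_trans (Matrix.rank_mul_le_left _ _) (Matrix.rank_mul_le_right _ _)) hY
    have hXY : X - Y = Ψ * (D - Z) * Vᵀ := by
      have hy : Ψ * Z * Vᵀ = Y := by
        rw [hZdef]
        calc Ψ * (Ψᵀ * Y * V) * Vᵀ = (Ψ * Ψᵀ) * (Y * (V * Vᵀ)) := by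
              simp only [Matrix.mul_assoc]
          _ = Y := by rw [hΨ', hV', Matrix.one_mul, Matrix.mul_one]
      rw [hX, ← hy, Matrix.mul_sub, Matrix.sub_mul]
    unfold frobNorm
    apply Real.sqrt_le_sqrt
    rw [hDDr, hXY, frobSq_conj Ψ V hΨ hV, frobSq_conj Ψ V hΨ hV, hDDrSq]
    exact key_ineq σ r hmono hpos Z hZr
  · unfold frobNorm
    rw [hfr2]
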